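/- Let O(x, ε) be real-analytic near the origin with O(0,0) = 0, and for small ε ≠ 0 set y_ε(x) = √(x² + ε²(1 + O(x, ε))). Let K_ε(x) denote the signed curvature of the graph of y_ε and k_ε(x) = ε²/(ε² + 2x²)^(3/2). Then for every fixed x ≠ 0 in a suitable neighborhood of 0, the quotient K_ε(x)/k_ε(x) converges as ε → 0 to Ψ(x) = 1 + O(x, 0) - x·∂_x O(x, 0) + (x²/2)·∂²_x O(x, 0). -/

import Mathlib

open Filter

private lemma sq_rpow_three_halves {v : ℝ} (hv : 0 ≤ v) : (v ^ 2) ^ ((3:ℝ)/2) = v ^ 3 := by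
  rw [← Real.rpow_natCast v 2, ← Real.rpow_mul hv, ← Real.rpow_natCast v 3]
  norm_num

private lemma curv_alg (sa b c N e t : ℝ) (hsa : 0 < sa) (ht : 0 < t) (he : e ≠ 0)
    (hN : 2 * c * sa ^ 2 - b ^ 2 = e ^ 2 * N) :
    (c * (2 * sa) - b * (b / sa)) / (2 * sa) ^ 2 / (1 + (b / (2 * sa)) ^ 2) ^ ((3:ℝ)/2) /
        (e ^ 2 / t ^ ((3:ℝ)/2))
      = 2 * N * (t / (4 * sa ^ 2 + b ^ 2)) ^ ((3:ℝ)/2) := by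
  have h4 : (0:ℝ) < 4 * sa ^ 2 + b ^ 2 := by positivity
  have key1 : 1 + (b / (2 * sa)) ^ 2 = (4 * sa ^ 2 + b ^ 2) / (2 * sa) ^ 2 := by
    field_simp; ring
  rw [key1, Real.div_rpow h4.le (by positivity), Real.div_rpow ht.le h4.le,
    sq_rpow_three_halves (by positivity : (0:ℝ) ≤ 2 * sa)]
  have hnum : c * (2 * sa) - b * (b / sa) = e ^ 2 * N / sa := by
    rw [← hN]; field_simp
  rw [hnum]
  have hS : 0 < (4 * sa ^ 2 + b ^ 2) ^ ((3:ℝ)/2) := Real.rpow_pos_of_pos h4 _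
  have hT : 0 < t ^ ((3:ℝ)/2) := Real.rpow_pos_of_pos ht _
  field_simp

private noncomputable def pd (f : ℝ × ℝ → ℝ) : ℝ × ℝ → ℝ := fun p => fderiv ℝ f p (1, 0)

private lemma pd_analyticAt {f : ℝ × ℝ → ℝ} {p : ℝ × ℝ} (hf : AnalyticAt ℝ f p) :
    AnalyticAt ℝ (pd f) p :=
  ((ContinuousLinearMap.apply ℝ ℝ ((1:ℝ), (0:ℝ))).analyticAt _).comp hf.fderiv

private lemma pd_hasDerivAt {f : ℝ × ℝ → ℝ} {s e : ℝ} (hf : AnalyticAt ℝ f (s, e)) :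
    HasDerivAt (fun t => f (t, e)) (pd f (s, e)) s := by
  have h1 := hf.differentiableAt.hasFDerivAt
  have h2 : HasDerivAt (fun t : ℝ => (t, e)) ((1:ℝ), (0:ℝ)) s :=
    (hasDerivAt_id s).prodMk (hasDerivAt_const s e)
  exact h1.comp_hasDerivAt s h2

private lemma quarter_rpow : ((1:ℝ)/4) ^ ((3:ℝ)/2) = 1/8 := by
  have : ((1:ℝ)/4) = (1/2) ^ 2 := by norm_num
  rw [this, sq_rpow_three_halves (by norm_num : (0:ℝ) ≤ 1/2)]
  norm_num

theorem curvature_quotient_limit (O : ℝ → ℝ → ℝ)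
    (hO : AnalyticAt ℝ (fun p : ℝ × ℝ => O p.1 p.2) (0, 0))
    (hO0 : O 0 0 = 0)
    (hpos : ∀ᶠ p : ℝ × ℝ in nhds (0, 0), 0 < 1 + O p.1 p.2) :
    ∃ U ∈ nhds (0 : ℝ), ∀ x ∈ U, x ≠ 0 →
      Tendsto (fun ε : ℝ =>
          (deriv (deriv (fun s => Real.sqrt (s ^ 2 + ε ^ 2 * (1 + O s ε)))) x /
              (1 + (deriv (fun s => Real.sqrt (s ^ 2 + ε ^ 2 * (1 + O s ε))) x) ^ 2)
                ^ ((3 : ℝ) / 2)) /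
            (ε ^ 2 / (ε ^ 2 + 2 * x ^ 2) ^ ((3 : ℝ) / 2)))
        (nhdsWithin 0 {0}ᶜ)
        (nhds (1 + O x 0 - x * deriv (fun s => O s 0) x
          + x ^ 2 / 2 * deriv (deriv (fun s => O s 0)) x)) := by
  classical
  set F : ℝ × ℝ → ℝ := fun p : ℝ × ℝ => O p.1 p.2 with hFdef
  have h1 : ∀ᶠ p : ℝ × ℝ in nhds (0, 0), AnalyticAt ℝ F p :=
    (isOpen_analyticAt ℝ F).mem_nhds hO
  obtain ⟨r, hr, hball⟩ := Metric.eventually_nhds_iff_ball.mp (h1.and hpos)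
  have hmemball : ∀ s e : ℝ, |s| < r → |e| < r → ((s, e) : ℝ × ℝ) ∈ Metric.ball ((0:ℝ), (0:ℝ)) r := by
    intro s e hs he
    rw [Metric.mem_ball, Prod.dist_eq]
    simp only [dist_zero_right, Real.norm_eq_abs]
    exact max_lt hs he
  have hAn : ∀ p ∈ Metric.ball ((0:ℝ), (0:ℝ)) r, AnalyticAt ℝ F p := fun p hp => (hball p hp).1
  have hAn1 : ∀ p ∈ Metric.ball ((0:ℝ), (0:ℝ)) r, AnalyticAt ℝ (pd F) p :=
    fun p hp => pd_analyticAt (hAn p hp)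
  refine ⟨Metric.ball (0:ℝ) (r/2), Metric.ball_mem_nhds _ (by positivity), ?_⟩
  intro x hxU hx
  have hxr : |x| < r / 2 := by
    simpa [Real.dist_eq] using Metric.mem_ball.mp hxU
  set δ : ℝ := min |x| (r/2) with hδdef
  have hδ : 0 < δ := lt_min (abs_pos.mpr hx) (by positivity)
  have hnear : ∀ s : ℝ, |s - x| < δ → s ≠ 0 ∧ |s| < r := by
    intro s hs
    constructor
    · intro h0
      rw [h0] at hs
      simp only [zero_sub, abs_neg] at hs
      exact absurd (lt_of_lt_of_le hs (min_le_left _ _)) (lt_irrefl _)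
    · calc |s| = |x + (s - x)| := by ring_nf
        _ ≤ |x| + |s - x| := abs_add_le _ _
        _ < r/2 + r/2 := by
            have := lt_of_lt_of_le hs (min_le_right _ _)
            linarith
        _ = r := by ring
  have hxball : ((x:ℝ), (0:ℝ)) ∈ Metric.ball ((0:ℝ), (0:ℝ)) r :=
    hmemball x 0 (by linarith [abs_nonneg x]) (by simpa using hr)
  -- derivative of inner function in s
  have ha : ∀ s e : ℝ, ((s, e) : ℝ × ℝ) ∈ Metric.ball ((0:ℝ), (0:ℝ)) r →
      HasDerivAt (fun t => t ^ 2 + e ^ 2 * (1 + O t e)) (2 * s + e ^ 2 * pd F (s, e)) s := by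
    intro s e hp
    have h1 : HasDerivAt (fun t : ℝ => t ^ 2) (2 * s) s := by
      simpa using hasDerivAt_pow 2 s
    have h2 : HasDerivAt (fun t => O t e) (pd F (s, e)) s := pd_hasDerivAt (hAn _ hp)
    have h3 : HasDerivAt (fun t => e ^ 2 * (1 + O t e)) (e ^ 2 * pd F (s, e)) s := by
      simpa using ((hasDerivAt_const s (1:ℝ)).add h2).const_mul (e ^ 2)
    exact h1.add h3
  -- key partial derivative facts at (x, 0)
  have hd1 : deriv (fun s => O s 0) x = pd F (x, 0) := (pd_hasDerivAt (hAn _ hxball)).deriv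
  have hd2 : deriv (deriv (fun s => O s 0)) x = pd (pd F) (x, 0) := by
    have hev2 : deriv (fun s => O s 0) =ᶠ[nhds x] fun s => pd F (s, 0) := by
      filter_upwards [Metric.ball_mem_nhds x hδ] with s hs
      have hs' : |s - x| < δ := by simpa [Real.dist_eq] using hs
      exact (pd_hasDerivAt (hAn _ (hmemball s 0 (hnear s hs').2 (by simpa using hr)))).deriv
    rw [hev2.deriv_eq]
    exact (pd_hasDerivAt (hAn1 _ hxball)).deriv
  -- the comparison function
  set N : ℝ → ℝ := fun e => 2 * x ^ 2 * pd (pd F) (x, e) + 4 * (1 + O x e) - 4 * x * pd F (x, e)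
      + e ^ 2 * (2 * (1 + O x e) * pd (pd F) (x, e) - (pd F (x, e)) ^ 2) with hNdef
  set Gf : ℝ → ℝ := fun e => 2 * N e *
      ((e ^ 2 + 2 * x ^ 2) /
        (4 * (x ^ 2 + e ^ 2 * (1 + O x e)) + (2 * x + e ^ 2 * pd F (x, e)) ^ 2)) ^ ((3:ℝ)/2)
    with hGfdef
  -- Claim 1: for small nonzero e the expression equals Gf e
  have claim1 : ∀ e : ℝ, |e| < r / 2 → e ≠ 0 →
      (deriv (deriv (fun s => Real.sqrt (s ^ 2 + e ^ 2 * (1 + O s e)))) x /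
          (1 + (deriv (fun s => Real.sqrt (s ^ 2 + e ^ 2 * (1 + O s e))) x) ^ 2)
            ^ ((3 : ℝ) / 2)) /
        (e ^ 2 / (e ^ 2 + 2 * x ^ 2) ^ ((3 : ℝ) / 2)) = Gf e := by
    intro e her he
    have hmem : ∀ s : ℝ, |s - x| < δ → ((s, e) : ℝ × ℝ) ∈ Metric.ball ((0:ℝ), (0:ℝ)) r :=
      fun s hs => hmemball s e (hnear s hs).2 (by linarith)
    have hapos : ∀ s : ℝ, |s - x| < δ → 0 < s ^ 2 + e ^ 2 * (1 + O s e) := by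
      intro s hs
      have h1 : 0 < 1 + O s e := (hball _ (hmem s hs)).2
      have h2 : s ≠ 0 := (hnear s hs).1
      have h3 : 0 < s ^ 2 := lt_of_le_of_ne (sq_nonneg s) (Ne.symm (pow_ne_zero 2 h2))
      nlinarith [mul_nonneg (sq_nonneg e) h1.le]
    have hxx : |x - x| < δ := by simpa using hδ
    have hga : ∀ s : ℝ, |s - x| < δ →
        HasDerivAt (fun t => Real.sqrt (t ^ 2 + e ^ 2 * (1 + O t e)))
          ((2 * s + e ^ 2 * pd F (s, e)) / (2 * Real.sqrt (s ^ 2 + e ^ 2 * (1 + O s e)))) s :=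
      fun s hs => (ha s e (hmem s hs)).sqrt (hapos s hs).ne'
    have d1 : deriv (fun t => Real.sqrt (t ^ 2 + e ^ 2 * (1 + O t e))) x
        = (2 * x + e ^ 2 * pd F (x, e)) / (2 * Real.sqrt (x ^ 2 + e ^ 2 * (1 + O x e))) :=
      (hga x hxx).deriv
    have hsq : Real.sqrt (x ^ 2 + e ^ 2 * (1 + O x e)) ≠ 0 :=
      (Real.sqrt_pos.mpr (hapos x hxx)).ne'
    have hev : deriv (fun t => Real.sqrt (t ^ 2 + e ^ 2 * (1 + O t e)))
        =ᶠ[nhds x] fun s => (2 * s + e ^ 2 * pd F (s, e)) /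
          (2 * Real.sqrt (s ^ 2 + e ^ 2 * (1 + O s e))) := by
      filter_upwards [Metric.ball_mem_nhds x hδ] with s hs
      exact (hga s (by simpa [Real.dist_eq] using hs)).deriv
    have hb : HasDerivAt (fun s => 2 * s + e ^ 2 * pd F (s, e))
        (2 + e ^ 2 * pd (pd F) (x, e)) x := by
      have h1 : HasDerivAt (fun s : ℝ => 2 * s) 2 x := by
        simpa using (hasDerivAt_id x).const_mul (2:ℝ)
      have h2 : HasDerivAt (fun s => e ^ 2 * pd F (s, e)) (e ^ 2 * pd (pd F) (x, e)) x :=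
        (pd_hasDerivAt (hAn1 _ (hmem x hxx))).const_mul (e ^ 2)
      exact h1.add h2
    have hden : HasDerivAt (fun s => 2 * Real.sqrt (s ^ 2 + e ^ 2 * (1 + O s e)))
        ((2 * x + e ^ 2 * pd F (x, e)) / Real.sqrt (x ^ 2 + e ^ 2 * (1 + O x e))) x := by
      have := (hga x hxx).const_mul (2:ℝ)
      refine this.congr_deriv ?_
      ring
    have hq : HasDerivAt (fun s => (2 * s + e ^ 2 * pd F (s, e)) /
          (2 * Real.sqrt (s ^ 2 + e ^ 2 * (1 + O s e))))
        (((2 + e ^ 2 * pd (pd F) (x, e)) * (2 * Real.sqrt (x ^ 2 + e ^ 2 * (1 + O x e)))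
            - (2 * x + e ^ 2 * pd F (x, e)) *
              ((2 * x + e ^ 2 * pd F (x, e)) / Real.sqrt (x ^ 2 + e ^ 2 * (1 + O x e))))
          / (2 * Real.sqrt (x ^ 2 + e ^ 2 * (1 + O x e))) ^ 2) x :=
      hb.div hden (by simpa using hsq)
    have d2 : deriv (deriv (fun t => Real.sqrt (t ^ 2 + e ^ 2 * (1 + O t e)))) x
        = ((2 + e ^ 2 * pd (pd F) (x, e)) * (2 * Real.sqrt (x ^ 2 + e ^ 2 * (1 + O x e)))
            - (2 * x + e ^ 2 * pd F (x, e)) *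
              ((2 * x + e ^ 2 * pd F (x, e)) / Real.sqrt (x ^ 2 + e ^ 2 * (1 + O x e))))
          / (2 * Real.sqrt (x ^ 2 + e ^ 2 * (1 + O x e))) ^ 2 := by
      rw [hev.deriv_eq]
      exact hq.deriv
    rw [d1, d2]
    have hApos := hapos x hxx
    have hsa : 0 < Real.sqrt (x ^ 2 + e ^ 2 * (1 + O x e)) := Real.sqrt_pos.mpr hApos
    have ht : 0 < e ^ 2 + 2 * x ^ 2 := by positivity
    have hNkey : 2 * (2 + e ^ 2 * pd (pd F) (x, e)) * Real.sqrt (x ^ 2 + e ^ 2 * (1 + O x e)) ^ 2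
        - (2 * x + e ^ 2 * pd F (x, e)) ^ 2 = e ^ 2 * N e := by
      rw [Real.sq_sqrt hApos.le, hNdef]
      ring
    have halg := curv_alg (Real.sqrt (x ^ 2 + e ^ 2 * (1 + O x e)))
      (2 * x + e ^ 2 * pd F (x, e)) (2 + e ^ 2 * pd (pd F) (x, e)) (N e) e
      (e ^ 2 + 2 * x ^ 2) hsa ht he hNkey
    rw [Real.sq_sqrt hApos.le] at halg
    rw [halg, hGfdef]
  -- Claim 2 : continuity of Gf at 0 and value there
  have hcF : ContinuousAt (fun e => O x e) 0 := by
    have := (hAn _ hxball).continuousAt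
    exact this.comp ((continuous_const.prodMk continuous_id).continuousAt)
  have hcF1 : ContinuousAt (fun e => pd F (x, e)) 0 := by
    have := (hAn1 _ hxball).continuousAt
    exact this.comp ((continuous_const.prodMk continuous_id).continuousAt)
  have hcF2 : ContinuousAt (fun e => pd (pd F) (x, e)) 0 := by
    have := (pd_analyticAt (hAn1 _ hxball)).continuousAt
    exact this.comp ((continuous_const.prodMk continuous_id).continuousAt)
  have hbasecont : ContinuousAt (fun e : ℝ => (e ^ 2 + 2 * x ^ 2) /
      (4 * (x ^ 2 + e ^ 2 * (1 + O x e)) + (2 * x + e ^ 2 * pd F (x, e)) ^ 2)) 0 := by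
    have hc1 : ContinuousAt (fun e : ℝ => e ^ 2 + 2 * x ^ 2) 0 := by fun_prop
    have hc2 : ContinuousAt (fun e : ℝ =>
        4 * (x ^ 2 + e ^ 2 * (1 + O x e)) + (2 * x + e ^ 2 * pd F (x, e)) ^ 2) 0 := by
      exact (continuousAt_const.mul (continuousAt_const.add
          (((continuousAt_id.pow 2)).mul (continuousAt_const.add hcF)))).add
        ((continuousAt_const.add ((continuousAt_id.pow 2).mul hcF1)).pow 2)
    refine hc1.div hc2 ?_
    have : (4 * (x ^ 2 + (0:ℝ) ^ 2 * (1 + O x 0)) + (2 * x + (0:ℝ) ^ 2 * pd F (x, 0)) ^ 2)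
        = 8 * x ^ 2 := by ring
    rw [this]
    positivity
  have hbase0 : (((0:ℝ) ^ 2 + 2 * x ^ 2) /
      (4 * (x ^ 2 + (0:ℝ) ^ 2 * (1 + O x 0)) + (2 * x + (0:ℝ) ^ 2 * pd F (x, 0)) ^ 2))
      = 1 / 4 := by
    have hx2 : x ^ 2 ≠ 0 := pow_ne_zero 2 hx
    field_simp
    ring_nf
    field_simp
  have hGfcont : ContinuousAt Gf 0 := by
    rw [hGfdef]
    refine (continuousAt_const.mul ?_).mul ?_
    · rw [hNdef]
      exact ((continuousAt_const.mul hcF2).add (continuousAt_const.mul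
          (continuousAt_const.add hcF))).sub (continuousAt_const.mul hcF1) |>.add
        ((continuousAt_id.pow 2).mul ((continuousAt_const.mul
          (continuousAt_const.add hcF)).mul hcF2 |>.sub (hcF1.pow 2)))
    · exact hbasecont.rpow_const (Or.inr (by norm_num))
  have hGf0 : Gf 0 = 1 + O x 0 - x * deriv (fun s => O s 0) x
      + x ^ 2 / 2 * deriv (deriv (fun s => O s 0)) x := by
    rw [hGfdef]
    simp only
    rw [hbase0, quarter_rpow, hNdef, hd1, hd2]
    ring
  have claim2 : Tendsto Gf (nhds 0) (nhds (1 + O x 0 - x * deriv (fun s => O s 0) x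
      + x ^ 2 / 2 * deriv (deriv (fun s => O s 0)) x)) := by
    rw [← hGf0]
    exact hGfcont.tendsto
  refine (claim2.mono_left nhdsWithin_le_nhds).congr' ?_
  filter_upwards [self_mem_nhdsWithin,
    mem_nhdsWithin_of_mem_nhds (Metric.ball_mem_nhds (0:ℝ) (by positivity : (0:ℝ) < r/2))]
    with e he0 heb
  exact (claim1 e (by simpa [Real.dist_eq] using heb) he0).symm
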